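/- Let c(n) = ⌊n·φ²/2⌋. For every positive integer n, {c(2n)·φ} lies in the open interval (0, (3 − √5)/2), and {c(2n+1)·φ} lies in the half-open interval (1/2, (4 − √5)/2] (with both endpoint behaviors as described: the value (4 − √5)/2 is achieved while 1/2 is not). -/

import Mathlib

noncomputable def φ : ℝ := (1 + Real.sqrt 5) / 2
noncomputable def c (n : ℕ) : ℤ := ⌊(n : ℝ) * φ ^ 2 / 2⌋

lemma s_sq : Real.sqrt 5 ^ 2 = 5 := Real.sq_sqrt (by norm_num)

lemma s_lb : (2.2 : ℝ) < Real.sqrt 5 := by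
  nlinarith [s_sq, Real.sqrt_nonneg 5]

lemma s_ub : Real.sqrt 5 < 2.3 := by
  nlinarith [s_sq, Real.sqrt_nonneg 5]

lemma irr5 : Irrational (Real.sqrt 5) := by
  have : Nat.Prime 5 := by norm_num
  simpa using this.irrational_sqrt

lemma phi_sq : φ * φ = φ + 1 := by
  unfold φ
  nlinarith [s_sq]

lemma nphi_irr (n : ℕ) (hn : 0 < n) : Irrational ((n : ℝ) * φ) := by
  rintro ⟨q, hq⟩
  apply irr5
  refine ⟨(2 * q - n) / n, ?_⟩
  have hn' : ((n : ℝ)) ≠ 0 := Nat.cast_ne_zero.mpr hn.ne'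
  unfold φ at hq
  push_cast
  field_simp
  linarith [hq]

set_option maxHeartbeats 2000000 in
theorem fract_c_phi_intervals (n : ℕ) (hn : 0 < n) :
    Int.fract ((c (2 * n) : ℝ) * φ) ∈ Set.Ioo 0 ((3 - Real.sqrt 5) / 2) ∧
    Int.fract ((c (2 * n + 1) : ℝ) * φ) ∈ Set.Ioc (1 / 2) ((4 - Real.sqrt 5) / 2) := by
  set s := Real.sqrt 5 with hs
  have hs2 : s ^ 2 = 5 := s_sq
  have hlb : (2.2 : ℝ) < s := s_lb
  have hub : s < 2.3 := s_ub
  have hφval : φ = (1 + s) / 2 := rfl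
  have hφ2 : φ * φ = φ + 1 := phi_sq
  set m := ⌊(n : ℝ) * φ⌋ with hmdef
  set t := Int.fract ((n : ℝ) * φ) with htdef
  have hmt : (n : ℝ) * φ = m + t := (Int.floor_add_fract _).symm
  have hm' : (m : ℝ) = n * φ - t := by linarith
  have ht0 : 0 < t := by
    rw [htdef]
    exact Int.fract_pos.mpr ((nphi_irr n hn).ne_int m)
  have ht1 : t < 1 := Int.fract_lt_one _
  have ht_ne : t ≠ (5 - s) / 4 := by
    intro h
    apply irr5
    refine ⟨(5 + 4 * m - 2 * n) / (2 * n + 1), ?_⟩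
    have h' : (n : ℝ) * ((1 + s) / 2) - m = (5 - s) / 4 := by
      rw [← hφval]; linarith
    have hd : ((2 * (n : ℝ) + 1)) ≠ 0 := by positivity
    push_cast
    rw [div_eq_iff hd]
    linarith [h']
  clear_value s m t
  clear hs htdef
  have h3s : (0 : ℝ) < 3 - s := by linarith
  -- even part
  have hceven : c (2 * n) = m + n := by
    show ⌊((2 * n : ℕ) : ℝ) * φ ^ 2 / 2⌋ = m + n
    have heq : ((2 * n : ℕ) : ℝ) * φ ^ 2 / 2 = (n : ℝ) * φ + (n : ℕ) := by
      push_cast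
      linear_combination (n : ℝ) * hφ2
    rw [heq, Int.floor_add_natCast, ← hmdef]
  have heeq : ((c (2 * n) : ℤ) : ℝ) * φ = ((2 * m + n : ℤ) : ℝ) + t * (2 - φ) := by
    rw [hceven]
    push_cast
    linear_combination (φ - 2) * hm' + (n : ℝ) * hφ2
  have hev : Int.fract ((c (2 * n) : ℝ) * φ) = t * (2 - φ) := by
    rw [heeq, Int.fract_intCast_add, Int.fract_eq_self.mpr ?_]
    constructor
    · rw [hφval]; nlinarith
    · rw [hφval]; nlinarith
  -- odd part
  have hoeq : ((2 * n + 1 : ℕ) : ℝ) * φ ^ 2 / 2 = ((m + n : ℤ) : ℝ) + (t + (1 + φ) / 2) := by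
    push_cast
    linear_combination hmt + ((n : ℝ) + 1 / 2) * hφ2
  have hcodd : c (2 * n + 1) = m + n + ⌊t + (1 + φ) / 2⌋ := by
    show ⌊((2 * n + 1 : ℕ) : ℝ) * φ ^ 2 / 2⌋ = m + n + ⌊t + (1 + φ) / 2⌋
    rw [hoeq, Int.floor_intCast_add]
  constructor
  · rw [hev]
    constructor
    · rw [hφval]; nlinarith
    · rw [hφval]; nlinarith
  · rcases ht_ne.lt_or_gt with hA | hB
    · -- t < (5 - s)/4
      have hfl : ⌊t + (1 + φ) / 2⌋ = 1 := by
        rw [Int.floor_eq_iff]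
        constructor
        · rw [hφval]; push_cast; nlinarith
        · rw [hφval]; push_cast; nlinarith
      have hoe : ((c (2 * n + 1) : ℤ) : ℝ) * φ
          = ((2 * m + n + 1 : ℤ) : ℝ) + (t * (2 - φ) + φ - 1) := by
        rw [hcodd, hfl]
        push_cast
        linear_combination (φ - 2) * hm' + (n : ℝ) * hφ2
      have hprod : t * (3 - s) < (5 - s) / 4 * (3 - s) :=
        mul_lt_mul_of_pos_right hA h3s
      have hodd : Int.fract ((c (2 * n + 1) : ℝ) * φ) = t * (2 - φ) + φ - 1 := by
        rw [hoe, Int.fract_intCast_add, Int.fract_eq_self.mpr ?_]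
        constructor
        · rw [hφval]; nlinarith
        · rw [hφval]; nlinarith [hs2]
      rw [hodd]
      constructor
      · rw [hφval]; nlinarith
      · rw [hφval]; nlinarith [hs2]
    · -- (5 - s)/4 < t
      have hfl : ⌊t + (1 + φ) / 2⌋ = 2 := by
        rw [Int.floor_eq_iff]
        constructor
        · rw [hφval]; push_cast; nlinarith
        · rw [hφval]; push_cast; nlinarith
      have hoe : ((c (2 * n + 1) : ℤ) : ℝ) * φ
          = ((2 * m + n + 3 : ℤ) : ℝ) + (t * (2 - φ) + 2 * φ - 3) := by
        rw [hcodd, hfl]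
        push_cast
        linear_combination (φ - 2) * hm' + (n : ℝ) * hφ2
      have hprod : (5 - s) / 4 * (3 - s) < t * (3 - s) :=
        mul_lt_mul_of_pos_right hB h3s
      have hprod2 : t * (3 - s) < 1 * (3 - s) :=
        mul_lt_mul_of_pos_right ht1 h3s
      have hodd : Int.fract ((c (2 * n + 1) : ℝ) * φ) = t * (2 - φ) + 2 * φ - 3 := by
        rw [hoe, Int.fract_intCast_add, Int.fract_eq_self.mpr ?_]
        constructor
        · rw [hφval]; nlinarith [hs2]
        · rw [hφval]; nlinarith [hs2]
      rw [hodd]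
      constructor
      · rw [hφval]; nlinarith [hs2]
      · rw [hφval]; nlinarith [hs2]
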